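/- arXiv:1410.6793 — 5 statements merged into one kernel-verified Lean document; each statement's English description precedes it below -/
import Mathlib

section
/- Let G be a finite simple graph, v a vertex of G with degree d(v) ≥ 1, and let u_1, u_2, …, u_{d(v)} be the neighbors of v listed so that their core numbers are nondecreasing: k(u_1) ≤ k(u_2) ≤ … ≤ k(u_{d(v)}). Then the core number of v satisfies k(v) = max over 1 ≤ i ≤ d(v) of min( k(u_i), d(v) − i + 1 ). -/
open SimpleGraph

variable {V : Type*}

/-- The degree of `u` inside the subgraph of `G` induced on the vertex set `S`. -/
noncomputable def degIn (G : SimpleGraph V) (S : Set V) (u : V) : ℕ :=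
  {w ∈ S | G.Adj u w}.ncard

/-- `v` belongs to the `k`-core of `G`: there is a vertex set containing `v` all of whose
vertices have degree at least `k` within the induced subgraph. -/
def inCore (G : SimpleGraph V) (k : ℕ) (v : V) : Prop :=
  ∃ S : Set V, v ∈ S ∧ ∀ u ∈ S, k ≤ degIn G S u

/-- The core number of `v`: the largest `k` such that `v` belongs to the `k`-core of `G`. -/
noncomputable def coreNumber (G : SimpleGraph V) (v : V) : ℕ :=
  sSup {k | inCore G k v}

/-- Degree of a vertex. -/
noncomputable def deg (G : SimpleGraph V) (v : V) : ℕ :=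
  (G.neighborSet v).ncard

/-- The `δ`-neighborhood of `v`: all vertices at shortest-path distance at most `δ` from `v`. -/
def ball (G : SimpleGraph V) (v : V) (δ : ℕ) : Set V :=
  {u | G.Reachable v u ∧ G.dist v u ≤ δ}

/-- The induced estimator `k̆_δ(v)`: the core number of `v` in `G[N_δ(v)]`. -/
noncomputable def kBreve (G : SimpleGraph V) (v : V) (δ : ℕ) : ℕ :=
  coreNumber (G.induce (_root_.ball G v δ)) ⟨v, Reachable.refl v, by rw [SimpleGraph.dist_self]; exact Nat.zero_le _⟩

/-- Neighborhood of `v` as a `Finset`. -/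
noncomputable def nbhd (G : SimpleGraph V) [Finite V] (v : V) : Finset V :=
  (G.neighborSet v).toFinite.toFinset

/-- The propagating estimator `k̂_δ(v)`: `k̂_0(v) = d(v)`, and `k̂_δ(v)` is the max over
`1 ≤ i ≤ d(v)` of `min (k̂_{δ-1}(u_i)) (d(v) - i + 1)`, where `u_1, …, u_{d(v)}` are the
neighbors of `v` listed with `k̂_{δ-1}`-values nondecreasing.  In the formalization the
sorted list `l` of the neighbors' `k̂_{δ-1}`-values is indexed from `0`, so entry `i` of `l`
is `k̂_{δ-1}(u_{i+1})` and `d(v) - i = d(v) - (i+1) + 1`. -/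
noncomputable def kHat (G : SimpleGraph V) [Finite V] : ℕ → V → ℕ
  | 0, v => deg G v
  | δ + 1, v =>
    let l : List ℕ := Multiset.sort ((nbhd G v).val.map (kHat G δ)) (· ≤ ·)
    (Finset.range l.length).sup fun i => min (l.getD i 0) (deg G v - i)


lemma degIn_mono' [Finite V] (G : SimpleGraph V) {S T : Set V} (h : S ⊆ T) (u : V) :
    degIn G S u ≤ degIn G T u :=
  Set.ncard_le_ncard (fun w hw => ⟨h hw.1, hw.2⟩) (Set.toFinite _)

lemma inCore_anti' (G : SimpleGraph V) {j k : ℕ} (h : j ≤ k) {v : V}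
    (hk : inCore G k v) : inCore G j v := by
  obtain ⟨S, hv, hS⟩ := hk
  exact ⟨S, hv, fun u hu => h.trans (hS u hu)⟩

lemma inCore_zero' (G : SimpleGraph V) (v : V) : inCore G 0 v :=
  ⟨{v}, rfl, fun _ _ => Nat.zero_le _⟩

lemma bddAbove_inCore' [Fintype V] (G : SimpleGraph V) (v : V) :
    BddAbove {k | inCore G k v} := by
  refine ⟨Fintype.card V, ?_⟩
  rintro k ⟨S, hv, hS⟩
  calc k ≤ degIn G S v := hS v hv
    _ ≤ Fintype.card V := by
        refine (Set.ncard_le_ncard (Set.subset_univ _) (Set.toFinite _)).trans ?_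
        simp [Set.ncard_univ]

lemma inCore_coreNumber' [Fintype V] (G : SimpleGraph V) (v : V) :
    inCore G (coreNumber G v) v :=
  Nat.sSup_mem ⟨0, inCore_zero' G v⟩ (bddAbove_inCore' G v)

lemma le_coreNumber' [Fintype V] {G : SimpleGraph V} {k : ℕ} {v : V}
    (h : inCore G k v) : k ≤ coreNumber G v :=
  le_csSup (bddAbove_inCore' G v) h

lemma core_set_prop' [Fintype V] (G : SimpleGraph V) (m : ℕ) :
    ∀ w ∈ {x | inCore G m x}, m ≤ degIn G {x | inCore G m x} w := by
  rintro w ⟨S, hw, hS⟩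
  have hsub : S ⊆ {x | inCore G m x} := fun x hx => ⟨S, hx, hS⟩
  exact (hS w hw).trans (degIn_mono' G hsub w)

/-- if `u` enumerates the neighbors of `v` (degree `d(v) ≥ 1`) with
nondecreasing core numbers, then `k(v) = max_{1 ≤ i ≤ d(v)} min (k(u_i)) (d(v) - i + 1)`.
Indices here run over `i : Fin (d(v))`, i.e. `0`-indexed, so term `i` is
`min (k(u i)) (d(v) - i) = min (k(u_{i+1})) (d(v) - (i+1) + 1)`. -/
theorem stmt6 {V : Type*} [Fintype V] (G : SimpleGraph V) (v : V) (hd : 1 ≤ deg G v)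
    (u : Fin (deg G v) → V)
    (hinj : Function.Injective u)
    (hadj : ∀ i, G.Adj v (u i))
    (hsurj : ∀ w, G.Adj v w → ∃ i, u i = w)
    (hmono : Monotone fun i => coreNumber G (u i)) :
    coreNumber G v =
      Finset.univ.sup fun i : Fin (deg G v) => min (coreNumber G (u i)) (deg G v - (i : ℕ)) := by
  classical
  refine le_antisymm ?_ (Finset.sup_le fun i _ => ?_)
  · -- upper bound
    rcases Nat.eq_zero_or_pos (coreNumber G v) with h0 | hpos
    · rw [h0]; exact Nat.zero_le _
    obtain ⟨S, hvS, hS⟩ := inCore_coreNumber' G v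
    have hkd : coreNumber G v ≤ deg G v := by
      refine (hS v hvS).trans ?_
      unfold degIn deg
      exact Set.ncard_le_ncard (fun w hw => hw.2) (Set.toFinite _)
    set I : Finset (Fin (deg G v)) :=
      Finset.univ.filter (fun i => coreNumber G v ≤ coreNumber G (u i)) with hI
    have hsubI : {w ∈ S | G.Adj v w} ⊆ ↑(I.image u) := by
      rintro w ⟨hwS, hwadj⟩
      obtain ⟨j, rfl⟩ := hsurj w hwadj
      refine Finset.mem_coe.mpr (Finset.mem_image_of_mem u ?_)
      rw [hI, Finset.mem_filter]
      exact ⟨Finset.mem_univ _, le_coreNumber' ⟨S, hwS, hS⟩⟩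
    have hkI : coreNumber G v ≤ I.card := by
      have h1 : coreNumber G v ≤ ({w ∈ S | G.Adj v w}).ncard := hS v hvS
      have h2 : ({w ∈ S | G.Adj v w}).ncard ≤ (I.image u).card := by
        rw [← Set.ncard_coe_finset]
        exact Set.ncard_le_ncard hsubI (Set.toFinite _)
      have h3 : (I.image u).card ≤ I.card := Finset.card_image_le
      omega
    have hIne : I.Nonempty := Finset.card_pos.mp (by omega)
    have hi1mem : I.min' hIne ∈ I := I.min'_mem hIne
    have hile : (I.min' hIne : ℕ) ≤ deg G v - coreNumber G v := by
      have hsub2 : I ⊆ Finset.Ici (I.min' hIne) :=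
        fun j hj => Finset.mem_Ici.mpr (I.min'_le j hj)
      have := Finset.card_le_card hsub2
      rw [Fin.card_Ici] at this
      omega
    have hdk : deg G v - coreNumber G v < deg G v := by omega
    have hki0 : coreNumber G v ≤ coreNumber G (u ⟨deg G v - coreNumber G v, hdk⟩) := by
      have h1 : coreNumber G v ≤ coreNumber G (u (I.min' hIne)) :=
        (Finset.mem_filter.mp hi1mem).2
      exact h1.trans (hmono (show I.min' hIne ≤ ⟨deg G v - coreNumber G v, hdk⟩ from hile))
    have hle := Finset.le_sup
      (f := fun i : Fin (deg G v) => min (coreNumber G (u i)) (deg G v - (i : ℕ)))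
      (Finset.mem_univ ⟨deg G v - coreNumber G v, hdk⟩)
    refine le_trans ?_ hle
    simp only
    have heq : deg G v - (deg G v - coreNumber G v) = coreNumber G v := by omega
    rw [heq]
    exact le_min hki0 le_rfl
  · -- lower bound
    set m := min (coreNumber G (u i)) (deg G v - (i : ℕ)) with hm
    refine le_coreNumber' ?_
    refine ⟨insert v {x | inCore G m x}, Set.mem_insert _ _, ?_⟩
    intro w hw
    rcases Set.mem_insert_iff.mp hw with h | hwC
    · rw [h]
      have hJ : (u '' {j | i ≤ j}) ⊆ {x ∈ insert v {x | inCore G m x} | G.Adj v x} := by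
        rintro x ⟨j, hj, rfl⟩
        refine ⟨Set.mem_insert_of_mem _ ?_, hadj j⟩
        have h1 : m ≤ coreNumber G (u j) := (min_le_left _ _).trans (hmono hj)
        exact inCore_anti' G h1 (inCore_coreNumber' G (u j))
      have h2 : (u '' {j | i ≤ j}).ncard = deg G v - (i : ℕ) := by
        rw [Set.ncard_image_of_injective _ hinj]
        have he : {j : Fin (deg G v) | i ≤ j} = ↑(Finset.Ici i) := by rw [Finset.coe_Ici]; rfl
        rw [he, Set.ncard_coe_finset, Fin.card_Ici]
      have h3 : (u '' {j | i ≤ j}).ncard ≤ degIn G (insert v {x | inCore G m x}) v := by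
        unfold degIn
        exact Set.ncard_le_ncard hJ (Set.toFinite _)
      have h4 : m ≤ deg G v - (i : ℕ) := min_le_right _ _
      omega
    · exact (core_set_prop' G m w hwC).trans
        (degIn_mono' G (Set.subset_insert _ _) w)
end

section
/- Let G be a finite simple graph and ψ any function on the vertices of G satisfying ψ(u) ≥ k(u) for every vertex u. Let v be a vertex with degree d(v) ≥ 1 and let u_1, u_2, …, u_{d(v)} be the neighbors of v listed so that ψ(u_1) ≤ ψ(u_2) ≤ … ≤ ψ(u_{d(v)}). Then k(v) ≤ max over 1 ≤ i ≤ d(v) of min( ψ(u_i), d(v) − i + 1 ). -/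
open SimpleGraph

variable {V : Type*}

/-- if `ψ` is an upper bound on core numbers and `u` enumerates the neighbors
of `v` (degree `d(v) ≥ 1`) with nondecreasing `ψ`-values, then
`k(v) ≤ max_{1 ≤ i ≤ d(v)} min (ψ(u_i)) (d(v) - i + 1)` (with `0`-indexed `i : Fin (d(v))`,
term `i` is `min (ψ(u i)) (d(v) - i)`). -/
theorem stmt7 {V : Type*} [Fintype V] (G : SimpleGraph V) (ψ : V → ℕ)
    (hψ : ∀ w, coreNumber G w ≤ ψ w) (v : V) (hd : 1 ≤ deg G v)
    (u : Fin (deg G v) → V)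
    (hinj : Function.Injective u)
    (hadj : ∀ i, G.Adj v (u i))
    (hsurj : ∀ w, G.Adj v w → ∃ i, u i = w)
    (hmono : Monotone fun i => ψ (u i)) :
    coreNumber G v ≤
      Finset.univ.sup fun i : Fin (deg G v) => min (ψ (u i)) (deg G v - (i : ℕ)) := by
  classical
  set k := coreNumber G v with hkdef
  rcases Nat.eq_zero_or_pos k with h0 | hpos
  · rw [h0]; exact Nat.zero_le _
  have hbdd : ∀ w : V, BddAbove {m | inCore G m w} := by
    intro w
    refine ⟨Fintype.card V, fun m hm => ?_⟩
    obtain ⟨S, hvS, hS⟩ := hm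
    refine le_trans (hS w hvS) ?_
    calc degIn G S w ≤ (Set.univ : Set V).ncard :=
          Set.ncard_le_ncard (Set.subset_univ _) Set.finite_univ
      _ = Fintype.card V := by rw [Set.ncard_univ, Nat.card_eq_fintype_card]
  have hmem : inCore G k v := by
    rw [hkdef, coreNumber]
    have h0 : inCore G 0 v := ⟨Set.univ, Set.mem_univ v, fun w _ => Nat.zero_le _⟩
    exact Nat.sSup_mem ⟨0, h0⟩ (hbdd v)
  obtain ⟨S, hvS, hS⟩ := hmem
  set A : Finset (Fin (deg G v)) := Finset.univ.filter (fun i => u i ∈ S) with hA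
  have hkA : k ≤ A.card := by
    have h1 : k ≤ degIn G S v := hS v hvS
    have hsub : {w ∈ S | G.Adj v w} ⊆ u '' (A : Set (Fin (deg G v))) := by
      rintro w ⟨hwS, hwadj⟩
      obtain ⟨i, rfl⟩ := hsurj w hwadj
      exact ⟨i, by simp [hA, hwS], rfl⟩
    have h2 : degIn G S v ≤ (u '' (A : Set (Fin (deg G v)))).ncard :=
      Set.ncard_le_ncard hsub (Set.Finite.image _ (Set.toFinite _))
    rw [Set.ncard_image_of_injective _ hinj, Set.ncard_coe_finset] at h2
    exact le_trans h1 h2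
  have hkpsi : ∀ i ∈ A, k ≤ ψ (u i) := by
    intro i hi
    have hiS : u i ∈ S := by simpa [hA] using hi
    refine le_trans ?_ (hψ (u i))
    exact le_csSup (hbdd (u i)) (⟨S, hiS, hS⟩ : inCore G k (u i))
  have hkd : k ≤ deg G v := by
    refine le_trans (hS v hvS) ?_
    exact Set.ncard_le_ncard (fun w hw => hw.2) (Set.toFinite _)
  obtain ⟨i₀, hi₀⟩ : ∃ i : Fin (deg G v), (i : ℕ) = deg G v - k :=
    ⟨⟨deg G v - k, by omega⟩, rfl⟩
  have hψi₀ : k ≤ ψ (u i₀) := by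
    by_contra hlt
    push_neg at hlt
    have hsub : A ⊆ Finset.Ioi i₀ := by
      intro i hi
      rw [Finset.mem_Ioi]
      by_contra hle
      push_neg at hle
      have h1 : ψ (u i) ≤ ψ (u i₀) := hmono hle
      have h2 := hkpsi i hi
      omega
    have hcard : A.card ≤ (Finset.Ioi i₀).card := Finset.card_le_card hsub
    rw [Fin.card_Ioi] at hcard
    omega
  have hfin : k ≤ min (ψ (u i₀)) (deg G v - (i₀ : ℕ)) := by omega
  exact le_trans hfin (Finset.le_sup (f := fun i : Fin (deg G v) => min (ψ (u i)) (deg G v - (i : ℕ))) (Finset.mem_univ i₀))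
end

section
/- Let G be a finite simple graph with all vertex degrees positive. For every vertex v and every integer δ ≥ 0, the propagating estimator is nonincreasing in δ: k̂_{δ+1}(v) ≤ k̂_δ(v). -/
open SimpleGraph

variable {V : Type*}

lemma countP_le_of_rel {A B : Multiset ℕ} (h : Multiset.Rel (· ≤ ·) A B) (x : ℕ) :
    B.countP (· < x) ≤ A.countP (· < x) := by
  induction h with
  | zero => simp
  | @cons a b as bs hab _ ih =>
    rw [Multiset.countP_cons, Multiset.countP_cons]
    gcongr
    split <;> split <;> omega

lemma sorted_le_of_mem_drop {l : List ℕ} (hl : l.Pairwise (· ≤ ·)) {i : ℕ} (hi : i < l.length)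
    {a : ℕ} (ha : a ∈ l.drop i) : l.get ⟨i, hi⟩ ≤ a := by
  obtain ⟨k, hk, rfl⟩ := List.mem_iff_getElem.1 ha
  rw [List.length_drop] at hk
  rw [List.getElem_drop]
  rcases Nat.eq_or_lt_of_le (Nat.le_add_right i k) with h | h
  · simp [List.get_eq_getElem, ← h]
  · exact hl.rel_get_of_lt (a := ⟨i, hi⟩) (b := ⟨i + k, by omega⟩) h

lemma sorted_le_of_mem_take {l : List ℕ} (hl : l.Pairwise (· ≤ ·)) {i : ℕ} (hi : i < l.length)
    {a : ℕ} (ha : a ∈ l.take (i + 1)) : a ≤ l.get ⟨i, hi⟩ := by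
  obtain ⟨k, hk, rfl⟩ := List.mem_iff_getElem.1 ha
  rw [List.length_take] at hk
  rw [List.getElem_take]
  rcases Nat.eq_or_lt_of_le (show k ≤ i by omega) with h | h
  · simp [List.get_eq_getElem, h]
  · exact hl.rel_get_of_lt (a := ⟨k, by omega⟩) (b := ⟨i, hi⟩) h

lemma sorted_countP_le {l : List ℕ} (hl : l.Pairwise (· ≤ ·)) {i : ℕ} (hi : i < l.length) :
    l.countP (· < l.get ⟨i, hi⟩) ≤ i := by
  obtain ⟨x, hx⟩ : ∃ x, l.get ⟨i, hi⟩ = x := ⟨_, rfl⟩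
  rw [hx]
  conv_lhs => rw [← List.take_append_drop i l]
  rw [List.countP_append]
  have h1 : (l.take i).countP (· < x) ≤ i :=
    le_trans List.countP_le_length (by simp)
  have h2 : (l.drop i).countP (· < x) = 0 := by
    rw [List.countP_eq_zero]
    intro a ha
    have := sorted_le_of_mem_drop hl hi ha
    simp only [hx] at this
    simp; omega
  omega

lemma sorted_lt_countP {l : List ℕ} (hl : l.Pairwise (· ≤ ·)) {i : ℕ} (hi : i < l.length)
    {x : ℕ} (hx : l.get ⟨i, hi⟩ < x) : i + 1 ≤ l.countP (· < x) := by
  conv_rhs => rw [← List.take_append_drop (i + 1) l]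
  rw [List.countP_append]
  have h1 : (l.take (i + 1)).countP (· < x) = (l.take (i + 1)).length := by
    rw [List.countP_eq_length]
    intro a ha
    have := sorted_le_of_mem_take hl hi ha
    simp; omega
  rw [h1, List.length_take]
  omega

lemma sorted_get_le {l m : List ℕ} (hl : l.Pairwise (· ≤ ·)) (hm : m.Pairwise (· ≤ ·))
    (hcnt : ∀ x, m.countP (· < x) ≤ l.countP (· < x))
    {i : ℕ} (hi : i < l.length) (hi' : i < m.length) :
    l.get ⟨i, hi⟩ ≤ m.get ⟨i, hi'⟩ := by
  by_contra hc
  push_neg at hc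
  have h1 := sorted_lt_countP hm hi' hc
  have h2 := sorted_countP_le hl hi
  have := hcnt (l.get ⟨i, hi⟩)
  omega

/-- in a finite graph with all degrees positive, the propagating estimator
is nonincreasing in `δ`: `k̂_{δ+1}(v) ≤ k̂_δ(v)`. -/
theorem stmt10 {V : Type*} [Fintype V] (G : SimpleGraph V) (hdeg : ∀ w, 0 < deg G w)
    (v : V) (δ : ℕ) :
    kHat G (δ + 1) v ≤ kHat G δ v := by
  induction δ generalizing v with
  | zero =>
    show (Finset.range _).sup _ ≤ deg G v
    exact Finset.sup_le fun i _ => le_trans (min_le_right _ _) (Nat.sub_le _ _)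
  | succ δ ih =>
    show (Finset.range _).sup _ ≤ (Finset.range _).sup _
    set s := (nbhd G v).val with hs
    set l' := Multiset.sort (s.map (kHat G (δ + 1))) (· ≤ ·) with hl'
    set l := Multiset.sort (s.map (kHat G δ)) (· ≤ ·) with hl
    have hlen' : l'.length = Multiset.card s := by
      rw [hl', Multiset.length_sort, Multiset.card_map]
    have hlen : l.length = Multiset.card s := by
      rw [hl, Multiset.length_sort, Multiset.card_map]
    have hcnt : ∀ x, l.countP (· < x) ≤ l'.countP (· < x) := by
      intro x
      have hrel : Multiset.Rel (· ≤ ·) (s.map (kHat G (δ + 1))) (s.map (kHat G δ)) :=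
        Multiset.rel_map.2 (Multiset.rel_refl_of_refl_on fun a _ => ih a)
      have := countP_le_of_rel hrel x
      rwa [← Multiset.coe_countP, ← Multiset.coe_countP, Multiset.sort_eq, Multiset.sort_eq]
    apply Finset.sup_le
    intro i hi
    rw [Finset.mem_range] at hi
    have hi' : i < l.length := by omega
    have hget : l'.get ⟨i, hi⟩ ≤ l.get ⟨i, hi'⟩ :=
      sorted_get_le (Multiset.pairwise_sort _ _) (Multiset.pairwise_sort _ _) hcnt hi hi'
    have hmem : i ∈ Finset.range l.length := Finset.mem_range.2 hi'
    refine le_trans ?_ (Finset.le_sup (f := fun i => min (l.getD i 0) (deg G v - i)) hmem)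
    show min (l'.getD i 0) (deg G v - i) ≤ min (l.getD i 0) (deg G v - i)
    rw [List.getD_eq_getElem l' 0 hi, List.getD_eq_getElem l 0 hi']
    exact min_le_min hget le_rfl
end

section
/- For every integer δ ≥ 0 and every integer x ≥ 1, there exists a finite simple graph G and a vertex v of G such that k̂_δ(v) − k(v) = x − 1. -/
open SimpleGraph

variable {V : Type*}

def ht (x : ℕ) : ℕ → ℕ
  | 0 => 0
  | (i+1) => ht x (i / x) + 1
decreasing_by exact Nat.lt_succ_of_le (Nat.div_le_self i x)

@[reducible] def tg (x n : ℕ) : SimpleGraph (Fin n) where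
  Adj i j := (0 < j.val ∧ i.val = (j.val - 1) / x) ∨ (0 < i.val ∧ j.val = (i.val - 1) / x)
  symm := ⟨fun i j h => Or.symm h⟩
  loopless := ⟨fun i h => by
    have := Nat.div_le_self (i.val - 1) x
    rcases h with ⟨hi, he⟩ | ⟨hi, he⟩ <;> omega⟩

def Sg (x k : ℕ) : ℕ := ∑ j ∈ Finset.range k, x ^ j

lemma Sg_succ (x k : ℕ) : Sg x (k+1) = x * Sg x k + 1 := geom_sum_succ

lemma lt_Sg {x : ℕ} (hx : 1 ≤ x) : ∀ u d, ht x u ≤ d → u < Sg x (d+1) := by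
  intro u
  induction u using Nat.strong_induction_on with
  | _ u IH =>
    intro d hd
    match u with
    | 0 => rw [Sg_succ]; omega
    | (i+1) =>
      rw [ht] at hd
      obtain ⟨e, rfl⟩ : ∃ e, d = e + 1 := ⟨d - 1, by omega⟩
      have h1 : i / x < Sg x (e+1) :=
        IH (i / x) (Nat.lt_succ_of_le (Nat.div_le_self i x)) e (by omega)
      have h2 : x * (i / x) + x ≤ x * Sg x (e+1) := by
        rw [← Nat.mul_succ]; exact Nat.mul_le_mul_left x h1
      have h3 := Nat.div_add_mod i x
      have h4 : i % x < x := Nat.mod_lt _ (by omega)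
      rw [Sg_succ]
      omega

lemma ht_adj {x n : ℕ} {u w : Fin n} (h : (tg x n).Adj u w) :
    ht x w.val ≤ ht x u.val + 1 := by
  rcases h with ⟨hw, he⟩ | ⟨hu, he⟩
  · obtain ⟨i, hi⟩ : ∃ i, w.val = i + 1 := ⟨w.val - 1, by omega⟩
    have he' : u.val = i / x := by rw [hi] at he; simpa using he
    rw [hi, ht, ← he']
  · obtain ⟨j, hj⟩ : ∃ j, u.val = j + 1 := ⟨u.val - 1, by omega⟩
    have he' : w.val = j / x := by rw [hj] at he; simpa using he
    rw [hj, ht, ← he']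
    omega

lemma adj_child {x n : ℕ} (hx : 0 < x) (u : Fin n) (r : ℕ) (h1 : 1 ≤ r) (h2 : r ≤ x)
    (hj : x * u.val + r < n) : (tg x n).Adj u ⟨x * u.val + r, hj⟩ := by
  left
  refine ⟨by simp; omega, ?_⟩
  show u.val = (x * u.val + r - 1) / x
  have h3 : x * u.val + r - 1 = x * u.val + (r - 1) := by omega
  rw [h3, Nat.mul_add_div hx, Nat.div_eq_of_lt (by omega)]
  omega

lemma ncard_child_range {x n : ℕ} (u : Fin n) (hch : x * u.val + x < n) :
    (Set.range (fun r : Fin x =>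
      (⟨x * u.val + (r.val + 1), by have := r.isLt; omega⟩ : Fin n))).ncard = x := by
  rw [← Set.image_univ, Set.ncard_image_of_injective _ ?_, Set.ncard_univ,
    Nat.card_eq_fintype_card, Fintype.card_fin]
  intro a b hab
  have := congrArg Fin.val hab
  simp only at this
  exact Fin.ext (by omega)

lemma deg_ge {x n : ℕ} (hx : 0 < x) (u : Fin n) (hch : x * u.val + x < n) :
    x ≤ deg (tg x n) u := by
  refine le_trans (le_of_eq (ncard_child_range u hch).symm)
    (Set.ncard_le_ncard ?_ (Set.toFinite _))
  rintro w ⟨r, rfl⟩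
  exact adj_child hx u (r.val + 1) (by omega) (by have := r.isLt; omega) (by have := r.isLt; omega)

lemma deg_root {x n : ℕ} (hx : 0 < x) (h0 : 0 < n) (hn : x < n) :
    deg (tg x n) ⟨0, h0⟩ = x := by
  have hset : (tg x n).neighborSet ⟨0, h0⟩ =
      Set.range (fun r : Fin x => (⟨r.val + 1, by have := r.isLt; omega⟩ : Fin n)) := by
    ext w
    simp only [mem_neighborSet, Set.mem_range]
    constructor
    · rintro (⟨hw, he⟩ | ⟨hw, he⟩)
      · have hwx : w.val - 1 < x := by
          have := (Nat.div_eq_zero_iff.1 he.symm).resolve_left (by omega)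
          omega
        exact ⟨⟨w.val - 1, hwx⟩, Fin.ext (by simp; omega)⟩
      · simp at hw
    · rintro ⟨r, rfl⟩
      left
      refine ⟨by simp, ?_⟩
      show (0:ℕ) = (r.val + 1 - 1) / x
      rw [Nat.add_sub_cancel, Nat.div_eq_of_lt r.isLt]
  rw [deg, hset, ← Set.image_univ, Set.ncard_image_of_injective _ ?_, Set.ncard_univ,
    Nat.card_eq_fintype_card, Fintype.card_fin]
  intro a b hab
  have := congrArg Fin.val hab
  simp only at this
  exact Fin.ext (by omega)

lemma deg_pos {x n : ℕ} (hx : 0 < x) (hn : x < n) (u : Fin n) : 0 < deg (tg x n) u := by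
  rcases Nat.eq_zero_or_pos u.val with h0 | h0
  · -- root-like: has child 1
    have h1 : x * u.val + 1 < n := by rw [h0]; omega
    have := adj_child hx u 1 le_rfl hx h1
    rw [deg]
    exact (Set.ncard_pos (Set.toFinite _)).2 ⟨_, this⟩
  · -- has parent
    have hlt : (u.val - 1) / x < n := lt_of_le_of_lt (Nat.div_le_self _ _) (by omega)
    have : (tg x n).Adj u ⟨(u.val - 1) / x, hlt⟩ := Or.inr ⟨h0, rfl⟩
    rw [deg]
    exact (Set.ncard_pos (Set.toFinite _)).2 ⟨_, this⟩

----------------------------------------------------------------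

lemma length_sortList (G : SimpleGraph V) [Finite V] (d : ℕ) (v : V) :
    (Multiset.sort ((nbhd G v).val.map (kHat G d)) (· ≤ ·)).length = deg G v := by
  rw [Multiset.length_sort, Multiset.card_map]
  show (nbhd G v).card = deg G v
  rw [nbhd, deg, Set.ncard_eq_toFinset_card _ (G.neighborSet v).toFinite]

lemma kHat_le_deg (G : SimpleGraph V) [Finite V] (d : ℕ) (v : V) :
    kHat G d v ≤ deg G v := by
  cases d with
  | zero => simp [kHat]
  | succ d =>
    simp only [kHat]
    apply Finset.sup_le
    intro i _
    exact le_trans (min_le_right _ _) (Nat.sub_le _ _)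

lemma kHat_ge (G : SimpleGraph V) [Finite V] {d x : ℕ} {v : V}
    (hdeg : x ≤ deg G v) (hx : 0 < x)
    (hnb : ∀ w, G.Adj v w → x ≤ kHat G d w) : x ≤ kHat G (d + 1) v := by
  simp only [kHat]
  set l : List ℕ := Multiset.sort ((nbhd G v).val.map (kHat G d)) (· ≤ ·) with hl
  have hlen : l.length = deg G v := length_sortList G d v
  have h0 : 0 ∈ Finset.range l.length := by
    rw [hlen]; exact Finset.mem_range.2 (by omega)
  refine le_trans ?_ (Finset.le_sup h0)
  refine le_min ?_ (by omega)
  have hmem : l.getD 0 0 ∈ l := by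
    cases hl' : l with
    | nil => rw [hl'] at hlen; simp at hlen; omega
    | cons a t => simp [List.getD]
  have hmem2 : l.getD 0 0 ∈ (nbhd G v).val.map (kHat G d) := by
    rw [hl] at hmem
    exact (Multiset.mem_sort _).1 hmem
  obtain ⟨w, hw, hval⟩ := Multiset.mem_map.1 hmem2
  have hadj : G.Adj v w := by
    have : w ∈ nbhd G v := hw
    rw [nbhd, Set.Finite.mem_toFinset] at this
    exact this
  rw [← hval]
  exact hnb w hadj

----------------------------------------------------------------

lemma child_lt {x δ : ℕ} (hx : 1 ≤ x) (u : Fin (Sg x (δ+2))) (hu : ht x u.val ≤ δ) :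
    x * u.val + x < Sg x (δ+2) := by
  have h1 : u.val < Sg x (δ+1) := lt_Sg hx u.val δ hu
  have h2 : x * (u.val + 1) ≤ x * Sg x (δ+1) := Nat.mul_le_mul_left x h1
  rw [Nat.mul_succ] at h2
  have h3 : Sg x (δ+2) = x * Sg x (δ+1) + 1 := Sg_succ x (δ+1)
  omega

lemma kHat_tree {x δ : ℕ} (hx : 1 ≤ x) :
    ∀ d (u : Fin (Sg x (δ+2))), ht x u.val + d ≤ δ → x ≤ kHat (tg x (Sg x (δ+2))) d u := by
  intro d
  induction d with
  | zero =>
    intro u hu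
    simp only [kHat]
    exact deg_ge hx u (child_lt hx u (by omega))
  | succ d IH =>
    intro u hu
    refine kHat_ge _ (deg_ge hx u (child_lt hx u (by omega))) hx ?_
    intro w hw
    exact IH w (by have := ht_adj hw; omega)

lemma inCore_one {n : ℕ} (G : SimpleGraph (Fin n)) (hdeg : ∀ u, 0 < deg G u) (v : Fin n) :
    inCore G 1 v := by
  refine ⟨Set.univ, Set.mem_univ v, ?_⟩
  intro u _
  have : {w ∈ Set.univ | G.Adj u w} = G.neighborSet u := by
    ext w; simp [mem_neighborSet]
  rw [degIn, this]
  exact hdeg u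

lemma core_le_one {x n : ℕ} (hn : 0 < n) (v : Fin n) :
    ∀ k, inCore (tg x n) k v → k ≤ 1 := by
  intro k ⟨S, hv, hS⟩
  by_contra hk
  push_neg at hk
  obtain ⟨u, huS, hmax⟩ :=
    Set.Finite.exists_maximalFor (fun w : Fin n => ht x w.val) S (Set.toFinite S) ⟨v, hv⟩
  have hplt : (u.val - 1) / x < n := lt_of_le_of_lt (Nat.div_le_self _ _) (by omega)
  have hsub : {w ∈ S | (tg x n).Adj u w} ⊆ {(⟨(u.val - 1) / x, hplt⟩ : Fin n)} := by
    rintro w ⟨hwS, hadj⟩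
    have hle : ht x w.val ≤ ht x u.val := by
      by_contra hlt
      push_neg at hlt
      have : ht x w.val ≤ ht x u.val := hmax hwS (le_of_lt hlt)
      omega
    rcases hadj with ⟨hw, he⟩ | ⟨hu, he⟩
    · obtain ⟨i, hi⟩ : ∃ i, w.val = i + 1 := ⟨w.val - 1, by omega⟩
      have he' : u.val = i / x := by rw [hi] at he; simpa using he
      have : ht x w.val = ht x u.val + 1 := by rw [hi, ht, ← he']
      omega
    · exact Set.mem_singleton_iff.2 (Fin.ext he)
  have h1 : degIn (tg x n) S u ≤ 1 := by
    refine le_trans (Set.ncard_le_ncard hsub (Set.toFinite _)) ?_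
    simp
  have := hS u huS
  omega

lemma core_eq_one {x n : ℕ} (G : SimpleGraph (Fin n)) (hG : G = tg x n) (hn : 0 < n)
    (hdeg : ∀ u, 0 < deg G u) (v : Fin n) : coreNumber G v = 1 := by
  subst hG
  have h1 : inCore (tg x n) 1 v := inCore_one _ hdeg v
  have hub : ∀ k ∈ {k | inCore (tg x n) k v}, k ≤ 1 := fun k hk => core_le_one hn v k hk
  rw [coreNumber]
  exact le_antisymm (csSup_le ⟨1, h1⟩ hub) (le_csSup ⟨1, hub⟩ h1)

/-- for every `δ ≥ 0` and every `x ≥ 1` there is a finite simple graph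
(with all degrees positive) and a vertex `v` with `k̂_δ(v) - k(v) = x - 1`. -/
theorem stmt13 (δ x : ℕ) (hx : 1 ≤ x) :
    ∃ (n : ℕ) (G : SimpleGraph (Fin n)) (v : Fin n),
      (∀ u, 0 < deg G u) ∧ kHat G δ v - coreNumber G v = x - 1 := by
  have h3 : Sg x (δ+2) = x * Sg x (δ+1) + 1 := Sg_succ x (δ+1)
  have h4 : Sg x (δ+1) = x * Sg x δ + 1 := Sg_succ x δ
  have h5 : x ≤ x * Sg x (δ+1) := Nat.le_mul_of_pos_right x (by omega)
  have hn1 : x < Sg x (δ+2) := by omega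
  have h0 : 0 < Sg x (δ+2) := by omega
  refine ⟨Sg x (δ+2), tg x (Sg x (δ+2)), ⟨0, h0⟩, fun u => deg_pos (by omega) hn1 u, ?_⟩
  have hcore : coreNumber (tg x (Sg x (δ+2))) ⟨0, h0⟩ = 1 :=
    core_eq_one _ rfl h0 (fun u => deg_pos (by omega) hn1 u) _
  have hk1 : x ≤ kHat (tg x (Sg x (δ+2))) δ ⟨0, h0⟩ :=
    kHat_tree hx δ ⟨0, h0⟩ (by simp [ht])
  have hk2 : kHat (tg x (Sg x (δ+2))) δ ⟨0, h0⟩ ≤ x :=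
    le_trans (kHat_le_deg _ δ _) (le_of_eq (deg_root (by omega) h0 hn1))
  rw [hcore]
  omega
end

section
/- Let j ≥ 2 and ℓ ≥ 2 be integers and let T'_{j,ℓ} be the graph obtained from the complete j-ary tree T_{j,ℓ} by adding j new vertices w_1, …, w_j, each joined by an edge to every leaf of T_{j,ℓ}. Then the root v of T_{j,ℓ} has core number k(v) = j in T'_{j,ℓ}, and for every integer δ with 1 ≤ δ ≤ ℓ − 1 the induced estimator satisfies k̆_δ(v) = 1; consequently k(v) − k̆_δ(v) = j − 1 whenever ℓ ≥ δ + 1. -/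
open SimpleGraph

variable {V : Type*}

/-- The complete `j`-ary tree with `ℓ` levels.  A vertex at level `i` (for `1 ≤ i ≤ ℓ`) is a
list of length `i - 1` over `Fin j` recording the path of child-choices from the root `[]`;
two vertices are adjacent iff one is obtained from the other by prepending one child-choice. -/
def Tjl (j ℓ : ℕ) : SimpleGraph {l : List (Fin j) // l.length < ℓ} where
  Adj x y := (∃ c : Fin j, (y : List (Fin j)) = c :: (x : List (Fin j)))
    ∨ (∃ c : Fin j, (x : List (Fin j)) = c :: (y : List (Fin j)))
  symm := ⟨fun _ _ h => Or.symm h⟩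
  loopless := by
    refine ⟨?_⟩
    rintro x (⟨c, hc⟩ | ⟨c, hc⟩) <;>
      · have := congrArg List.length hc
        simp at this

instance (j ℓ : ℕ) : Finite {l : List (Fin j) // l.length < ℓ} :=
  (List.finite_length_lt (Fin j) ℓ).to_subtype

/-- The root of `Tjl j ℓ`. -/
def root (j ℓ : ℕ) (h : 0 < ℓ) : {l : List (Fin j) // l.length < ℓ} :=
  ⟨[], by simpa using h⟩

/-- `T'_{j,ℓ}`: the complete `j`-ary tree with `ℓ` levels together with `j` extra vertices
`w_1, …, w_j` (the `Sum.inr` vertices), each adjacent to every leaf (level-`ℓ` vertex) of the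
tree. -/
def Tjl' (j ℓ : ℕ) : SimpleGraph ({l : List (Fin j) // l.length < ℓ} ⊕ Fin j) where
  Adj x y :=
    match x, y with
    | Sum.inl a, Sum.inl b => (Tjl j ℓ).Adj a b
    | Sum.inl a, Sum.inr _ => a.val.length = ℓ - 1
    | Sum.inr _, Sum.inl b => b.val.length = ℓ - 1
    | Sum.inr _, Sum.inr _ => False
  symm := by
    refine ⟨?_⟩
    rintro (a | a) (b | b) h
    · exact (Tjl j ℓ).adj_symm h
    · exact h
    · exact h
    · exact h
  loopless := by
    refine ⟨?_⟩
    rintro (a | a) h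
    · exact (Tjl j ℓ).loopless.irrefl a h
    · exact h

section Aux

lemma ncard_le_of_inj {α : Type*} [Finite α] {n : ℕ} (f : Fin n → α)
    (hf : Function.Injective f) {T : Set α} (hT : ∀ c, f c ∈ T) : n ≤ T.ncard := by
  have hsub : Set.range f ⊆ T := by rintro _ ⟨c, rfl⟩; exact hT c
  have h1 : (Set.range f).ncard = n := by
    rw [← Set.image_univ, Set.ncard_image_of_injective _ hf, Set.ncard_univ,
      Nat.card_eq_fintype_card, Fintype.card_fin]
  calc n = (Set.range f).ncard := h1.symm
    _ ≤ T.ncard := Set.ncard_le_ncard hsub T.toFinite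

lemma tjl'_adj_inl_inl {j ℓ : ℕ} {a b : {l : List (Fin j) // l.length < ℓ}} :
    (Tjl' j ℓ).Adj (Sum.inl a) (Sum.inl b) ↔
      ((∃ c : Fin j, (b : List (Fin j)) = c :: (a : List (Fin j))) ∨
       (∃ c : Fin j, (a : List (Fin j)) = c :: (b : List (Fin j)))) := Iff.rfl

lemma tjl'_adj_inl_inr {j ℓ : ℕ} {a : {l : List (Fin j) // l.length < ℓ}} {i : Fin j} :
    (Tjl' j ℓ).Adj (Sum.inl a) (Sum.inr i) ↔ a.val.length = ℓ - 1 := Iff.rfl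

lemma tjl'_adj_inr_inl {j ℓ : ℕ} {a : {l : List (Fin j) // l.length < ℓ}} {i : Fin j} :
    (Tjl' j ℓ).Adj (Sum.inr i) (Sum.inl a) ↔ a.val.length = ℓ - 1 := Iff.rfl

lemma tjl'_adj_inr_inr {j ℓ : ℕ} {i i' : Fin j} :
    ¬ (Tjl' j ℓ).Adj (Sum.inr i) (Sum.inr i') := fun h => h

/-- Potential function: level for tree vertices, `ℓ` for the extra vertices. -/
def phiT (j ℓ : ℕ) : ({l : List (Fin j) // l.length < ℓ} ⊕ Fin j) → ℕ
  | Sum.inl a => a.val.length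
  | Sum.inr _ => ℓ

lemma phiT_adj {j ℓ : ℕ} {x y : {l : List (Fin j) // l.length < ℓ} ⊕ Fin j}
    (h : (Tjl' j ℓ).Adj x y) : phiT j ℓ y ≤ phiT j ℓ x + 1 := by
  cases x with
  | inl a =>
    cases y with
    | inl b =>
      rcases tjl'_adj_inl_inl.mp h with ⟨c, hc⟩ | ⟨c, hc⟩
      · simp [phiT, hc]
      · simp only [phiT]
        have := congrArg List.length hc
        simp at this
        omega
    | inr i =>
      have hb := tjl'_adj_inl_inr.mp h
      have := a.2
      simp only [phiT]
      omega
  | inr i =>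
    cases y with
    | inl b =>
      simp only [phiT]
      omega
    | inr i' => exact absurd h (tjl'_adj_inr_inr)

lemma phiT_walk_bound {j ℓ : ℕ} {x y : {l : List (Fin j) // l.length < ℓ} ⊕ Fin j}
    (p : (Tjl' j ℓ).Walk x y) : phiT j ℓ y ≤ phiT j ℓ x + p.length := by
  induction p with
  | nil => simp
  | cons h p ih =>
    have := phiT_adj h
    simp only [SimpleGraph.Walk.length_cons]
    omega

end Aux

section Main

variable {j ℓ : ℕ}

lemma deg_ge_j (hj : 2 ≤ j) (hℓ : 2 ≤ ℓ)
    (u : {l : List (Fin j) // l.length < ℓ} ⊕ Fin j) : j ≤ deg (Tjl' j ℓ) u := by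
  cases u with
  | inl a =>
    by_cases hlen : a.val.length + 1 < ℓ
    · refine ncard_le_of_inj (fun c => Sum.inl ⟨c :: a.val, by simpa using hlen⟩) ?_ ?_
      · intro c c' h
        simp only [Sum.inl.injEq, Subtype.mk.injEq, List.cons.injEq] at h
        exact h.1
      · intro c
        exact Or.inl ⟨c, rfl⟩
    · have hla : a.val.length = ℓ - 1 := by have := a.2; omega
      refine ncard_le_of_inj (fun c => Sum.inr c) ?_ ?_
      · intro c c' h; simpa using h
      · intro c; exact hla
  | inr i =>
    refine ncard_le_of_inj
      (fun c => Sum.inl ⟨c :: List.replicate (ℓ - 2) (⟨0, by omega⟩ : Fin j),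
        by simp; omega⟩) ?_ ?_
    · intro c c' h
      simp only [Sum.inl.injEq, Subtype.mk.injEq, List.cons.injEq] at h
      exact h.1
    · intro c
      show (_ : List (Fin j)).length = ℓ - 1
      simp; omega

lemma deg_root_le (hℓ : 2 ≤ ℓ) :
    deg (Tjl' j ℓ) (Sum.inl (root j ℓ (lt_of_lt_of_le two_pos hℓ))) ≤ j := by
  have hsub : (Tjl' j ℓ).neighborSet (Sum.inl (root j ℓ (lt_of_lt_of_le two_pos hℓ))) ⊆
      Set.range (fun c : Fin j => (Sum.inl ⟨[c], by simpa using hℓ.trans_lt' one_lt_two⟩ :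
        {l : List (Fin j) // l.length < ℓ} ⊕ Fin j)) := by
    intro u hu
    cases u with
    | inl b =>
      rcases tjl'_adj_inl_inl.mp hu with ⟨c, hc⟩ | ⟨c, hc⟩
      · exact ⟨c, congrArg Sum.inl (Subtype.ext hc.symm)⟩
      · exact absurd (congrArg List.length hc) (by simp [root])
    | inr i =>
      have h0 : ([] : List (Fin j)).length = ℓ - 1 := hu
      simp at h0
      omega
  have hcard : (Set.range (fun c : Fin j => (Sum.inl ⟨[c], by simpa using hℓ.trans_lt' one_lt_two⟩ :
      {l : List (Fin j) // l.length < ℓ} ⊕ Fin j))).ncard = j := by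
    rw [← Set.image_univ, Set.ncard_image_of_injective, Set.ncard_univ,
      Nat.card_eq_fintype_card, Fintype.card_fin]
    intro c c' h
    simp only [Sum.inl.injEq, Subtype.mk.injEq, List.cons.injEq] at h
    exact h.1
  calc deg (Tjl' j ℓ) _ ≤ _ := Set.ncard_le_ncard hsub (Set.toFinite _)
    _ = j := hcard

lemma core_root (hj : 2 ≤ j) (hℓ : 2 ≤ ℓ) :
    coreNumber (Tjl' j ℓ) (Sum.inl (root j ℓ (lt_of_lt_of_le two_pos hℓ))) = j := by
  have hlower : inCore (Tjl' j ℓ) j (Sum.inl (root j ℓ (lt_of_lt_of_le two_pos hℓ))) := by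
    refine ⟨Set.univ, trivial, fun u _ => ?_⟩
    have h1 : degIn (Tjl' j ℓ) Set.univ u = deg (Tjl' j ℓ) u := by
      unfold degIn deg
      congr 1
      ext w
      simp [SimpleGraph.neighborSet]
    rw [h1]
    exact deg_ge_j hj hℓ u
  have hupper : ∀ k ∈ {k | inCore (Tjl' j ℓ) k (Sum.inl (root j ℓ (lt_of_lt_of_le two_pos hℓ)))}, k ≤ j := by
    rintro k ⟨S, hvS, hS⟩
    have h1 := hS _ hvS
    have h2 : degIn (Tjl' j ℓ) S (Sum.inl (root j ℓ (lt_of_lt_of_le two_pos hℓ))) ≤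
        deg (Tjl' j ℓ) (Sum.inl (root j ℓ (lt_of_lt_of_le two_pos hℓ))) := by
      apply Set.ncard_le_ncard _ (Set.toFinite _)
      intro w hw
      exact hw.2
    exact h1.trans (h2.trans (deg_root_le hℓ))
  refine le_antisymm (csSup_le ⟨j, hlower⟩ hupper) (le_csSup ⟨j, hupper⟩ hlower)

lemma ball_inl (hℓ : 2 ≤ ℓ) {δ : ℕ} (hδ : δ ≤ ℓ - 1)
    {u : {l : List (Fin j) // l.length < ℓ} ⊕ Fin j}
    (hu : u ∈ _root_.ball (Tjl' j ℓ) (Sum.inl (root j ℓ (lt_of_lt_of_le two_pos hℓ))) δ) :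
    ∃ a, u = Sum.inl a := by
  obtain ⟨hr, hd⟩ := hu
  cases u with
  | inl a => exact ⟨a, rfl⟩
  | inr i =>
    exfalso
    obtain ⟨p, hp⟩ := hr.exists_walk_length_eq_dist
    have h2 := phiT_walk_bound p
    rw [hp] at h2
    simp only [phiT, root, List.length_nil] at h2 hd
    omega

lemma kBreve_root (hj : 2 ≤ j) (hℓ : 2 ≤ ℓ) {δ : ℕ} (hδ1 : 1 ≤ δ) (hδ : δ ≤ ℓ - 1) :
    kBreve (Tjl' j ℓ) (Sum.inl (root j ℓ (lt_of_lt_of_le two_pos hℓ))) δ = 1 := by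
  set v : {l : List (Fin j) // l.length < ℓ} ⊕ Fin j := Sum.inl (root j ℓ (lt_of_lt_of_le two_pos hℓ)) with hv
  set B := _root_.ball (Tjl' j ℓ) v δ with hB
  set G' := (Tjl' j ℓ).induce B with hG'
  -- the child [0] of the root, inside the ball
  have hchildlen : ([(⟨0, by omega⟩ : Fin j)] : List (Fin j)).length < ℓ := by simp; omega
  set cV : {l : List (Fin j) // l.length < ℓ} ⊕ Fin j :=
    Sum.inl ⟨[(⟨0, by omega⟩ : Fin j)], hchildlen⟩ with hcV
  have hadj : (Tjl' j ℓ).Adj v cV := Or.inl ⟨⟨0, by omega⟩, rfl⟩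
  have hcB : cV ∈ B := by
    refine ⟨hadj.reachable, ?_⟩
    calc (Tjl' j ℓ).dist v cV ≤ hadj.toWalk.length := SimpleGraph.dist_le _
      _ = 1 := rfl
      _ ≤ δ := hδ1
  have hvB : v ∈ B := ⟨SimpleGraph.Reachable.refl v, by
    rw [SimpleGraph.dist_self]; exact Nat.zero_le _⟩
  set v' : ↥B := ⟨v, hvB⟩ with hv'
  set c' : ↥B := ⟨cV, hcB⟩ with hc'
  have hne : v' ≠ c' := by
    intro h
    have : v = cV := congrArg Subtype.val h
    simp [hv, hcV, root] at this
  have hlower : inCore G' 1 v' := by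
    refine ⟨{v', c'}, Or.inl rfl, ?_⟩
    rintro u (rfl | rfl)
    · have : c' ∈ {w ∈ ({v', c'} : Set ↥B) | G'.Adj v' w} := ⟨Or.inr rfl, hadj⟩
      exact (Set.ncard_pos (Set.toFinite _)).mpr ⟨c', this⟩
    · have : v' ∈ {w ∈ ({v', c'} : Set ↥B) | G'.Adj c' w} := ⟨Or.inl rfl, hadj.symm⟩
      exact (Set.ncard_pos (Set.toFinite _)).mpr ⟨v', this⟩
  have hupper : ∀ k ∈ {k | inCore G' k v'}, k ≤ 1 := by
    rintro k ⟨S, hvS, hS⟩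
    obtain ⟨x, hxS, hmax⟩ := S.toFinite.exists_maximalFor (fun y : ↥B => phiT j ℓ y.val)
      S ⟨v', hvS⟩
    have hmax' : ∀ y ∈ S, phiT j ℓ y.val ≤ phiT j ℓ x.val := by
      intro y hy
      by_contra hlt
      push_neg at hlt
      exact absurd (hmax hy hlt.le) (not_le.mpr hlt)
    obtain ⟨a, ha⟩ := ball_inl hℓ hδ x.2
    have hdeg : degIn G' S x ≤ 1 := by
      rw [degIn, Set.ncard_le_one_iff (Set.toFinite _)]
      rintro w1 w2 ⟨hw1S, hw1a⟩ ⟨hw2S, hw2a⟩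
      obtain ⟨b1, hb1⟩ := ball_inl hℓ hδ w1.2
      obtain ⟨b2, hb2⟩ := ball_inl hℓ hδ w2.2
      have key : ∀ (w : ↥B) (b : {l : List (Fin j) // l.length < ℓ}), w ∈ S →
          w.val = Sum.inl b → G'.Adj x w → ∃ c : Fin j, (a : List (Fin j)) = c :: b.val := by
        intro w b hwS hwb hadjw
        have : (Tjl' j ℓ).Adj x.val w.val := hadjw
        rw [ha, hwb] at this
        rcases tjl'_adj_inl_inl.mp this with ⟨c, hc⟩ | ⟨c, hc⟩
        · exfalso
          have h1 := hmax' w hwS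
          rw [ha] at h1
          rw [hwb] at h1
          simp only [phiT] at h1
          have := congrArg List.length hc
          simp at this
          omega
        · exact ⟨c, hc⟩
      obtain ⟨c1, hc1⟩ := key w1 b1 hw1S hb1 hw1a
      obtain ⟨c2, hc2⟩ := key w2 b2 hw2S hb2 hw2a
      have : b1 = b2 := by
        ext : 1
        have h12 := hc1.symm.trans hc2
        simp only [List.cons.injEq] at h12
        exact h12.2
      apply Subtype.ext
      rw [hb1, hb2, this]
    exact (hS x hxS).trans hdeg
  show coreNumber G' _ = 1
  have hveq : (⟨v, SimpleGraph.Reachable.refl v, by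
      rw [SimpleGraph.dist_self]; exact Nat.zero_le _⟩ : ↥B) = v' := rfl
  rw [coreNumber]
  exact le_antisymm (csSup_le ⟨1, hlower⟩ hupper) (le_csSup ⟨1, hupper⟩ hlower)

end Main

/-- in `T'_{j,ℓ}` (`j, ℓ ≥ 2`) the root `v` of the underlying tree has core
number `j`, and for every `1 ≤ δ ≤ ℓ - 1` the induced estimator satisfies `k̆_δ(v) = 1`;
consequently `k(v) - k̆_δ(v) = j - 1` whenever `ℓ ≥ δ + 1`. -/
theorem stmt14 (j ℓ : ℕ) (hj : 2 ≤ j) (hℓ : 2 ≤ ℓ) :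
    coreNumber (Tjl' j ℓ) (Sum.inl (root j ℓ (by omega))) = j ∧
    ∀ δ : ℕ, 1 ≤ δ → δ ≤ ℓ - 1 →
      kBreve (Tjl' j ℓ) (Sum.inl (root j ℓ (by omega))) δ = 1 ∧
      coreNumber (Tjl' j ℓ) (Sum.inl (root j ℓ (by omega))) -
        kBreve (Tjl' j ℓ) (Sum.inl (root j ℓ (by omega))) δ = j - 1 := by
  refine ⟨core_root hj hℓ, fun δ hδ1 hδ => ?_⟩
  refine ⟨kBreve_root hj hℓ hδ1 hδ, ?_⟩
  rw [core_root hj hℓ, kBreve_root hj hℓ hδ1 hδ]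
end
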